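/- Let 1 < p₀ < p < p₀/(p₀−1), set r = p₀'/p = p₀/(p(p₀−1)) and s = p/p₀. Let u and ν be weights on 𝔻 such that u ∈ A_s⁺(𝔻) ∩ RH_{r'}(𝔻) and ν^r ∈ A₂⁺(𝔻). Then uν ∈ A_p⁺(𝔻) and [uν]_{A_p⁺} ≤ [u]_{A_s⁺} · [u]_{RH_{r'}} · [ν^r]_{A₂⁺}^{1/r}. -/

import Mathlib

noncomputable section

open MeasureTheory Filter Set
open scoped ENNReal

/-- Normalized planar Lebesgue measure `dA = dxdy/π` restricted to a set. -/
def normArea (E : Set ℂ) : Measure ℂ :=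
  ENNReal.ofReal Real.pi⁻¹ • volume.restrict E

/-- Normalized area measure on the unit disc. -/
def discMeasure : Measure ℂ := normArea (Metric.ball 0 1)

/-- Average of a nonnegative quantity over a set, in `ℝ≥0∞`. -/
def eAvg (μ : Measure ℂ) (I : Set ℂ) (w : ℂ → ℝ) : ℝ≥0∞ :=
  (∫⁻ z in I, ENNReal.ofReal (w z) ∂μ) / μ I

/-- The Békollè–Bonami `A_p⁺` characteristic of a weight on the unit disc: the supremum
over Carleson regions `D_r(z) ∩ 𝔻`, `z ∈ ∂𝔻`, `r > 0`, of
`(⨍ w dA)(⨍ w^{-1/(p-1)} dA)^{p-1}`. -/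
def ApPlusDisc (p : ℝ) (w : ℂ → ℝ) : ℝ≥0∞ :=
  ⨆ (z : ℂ) (_ : z ∈ Metric.sphere (0 : ℂ) 1) (r : ℝ) (_ : 0 < r),
    eAvg discMeasure (Metric.ball z r) w *
      (eAvg discMeasure (Metric.ball z r) fun x => w x ^ (-1 / (p - 1))) ^ (p - 1)

/-- The reverse Hölder `RH_q` characteristic of a weight on the unit disc
(over Carleson regions). -/
def RHDisc (q : ℝ) (w : ℂ → ℝ) : ℝ≥0∞ :=
  ⨆ (z : ℂ) (_ : z ∈ Metric.sphere (0 : ℂ) 1) (r : ℝ) (_ : 0 < r),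
    (eAvg discMeasure (Metric.ball z r) fun x => w x ^ q) ^ (1 / q) /
      eAvg discMeasure (Metric.ball z r) w

/-- A weight: measurable and positive almost everywhere. -/
def IsWeightOn (μ : Measure ℂ) (w : ℂ → ℝ) : Prop :=
  Measurable w ∧ ∀ᵐ z ∂μ, 0 < w z

lemma discMeasure_ball_ne_top (z : ℂ) (ρ : ℝ) : discMeasure (Metric.ball z ρ) ≠ ⊤ := by
  have h : discMeasure (Metric.ball z ρ) ≤ discMeasure Set.univ := measure_mono (subset_univ _)
  refine ne_top_of_le_ne_top ?_ h
  simp only [discMeasure, normArea, Measure.smul_apply, smul_eq_mul,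
    Measure.restrict_apply_univ]
  exact (ENNReal.mul_lt_top ENNReal.ofReal_lt_top measure_ball_lt_top).ne

lemma discMeasure_ball_ne_zero {z : ℂ} (hz : z ∈ Metric.sphere (0 : ℂ) 1) {ρ : ℝ}
    (hρ : 0 < ρ) : discMeasure (Metric.ball z ρ) ≠ 0 := by
  have hzabs : ‖z‖ = 1 := by simpa [Complex.dist_eq] using hz
  set ε : ℝ := min ρ 1 / 2 with hε
  have hε0 : 0 < ε := by positivity
  have hερ : ε < ρ := by
    have : min ρ 1 ≤ ρ := min_le_left _ _
    simp only [hε]; linarith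
  have hε1 : ε ≤ 1 / 2 := by
    have : min ρ 1 ≤ 1 := min_le_right _ _
    simp only [hε]; linarith
  set w : ℂ := ((1 - ε : ℝ) : ℂ) * z with hw
  have hw1 : w ∈ Metric.ball z ρ := by
    have : w - z = ((-ε : ℝ) : ℂ) * z := by push_cast [hw]; ring
    simp only [Metric.mem_ball, Complex.dist_eq, this, norm_mul, Complex.norm_real, Real.norm_eq_abs, hzabs,
      mul_one]
    rw [abs_of_nonpos (by linarith)]
    linarith
  have hw2 : w ∈ Metric.ball (0 : ℂ) 1 := by
    simp only [Metric.mem_ball, Complex.dist_eq, sub_zero, hw, norm_mul, Complex.norm_real, Real.norm_eq_abs,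
      hzabs, mul_one]
    rw [abs_of_nonneg (by linarith)]
    linarith
  have hvol : volume (Metric.ball z ρ ∩ Metric.ball (0 : ℂ) 1) ≠ 0 :=
    ((Metric.isOpen_ball.inter Metric.isOpen_ball).measure_pos volume ⟨w, hw1, hw2⟩).ne'
  simp only [discMeasure, normArea, Measure.smul_apply, smul_eq_mul,
    Measure.restrict_apply measurableSet_ball]
  refine mul_ne_zero ?_ hvol
  simp only [ne_eq, ENNReal.ofReal_eq_zero, not_le]
  positivity

lemma lintegral_ofReal_ne_zero {μ : Measure ℂ} (hμ : μ ≠ 0) {w : ℂ → ℝ}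
    (hmeas : Measurable w) (hpos : ∀ᵐ z ∂μ, 0 < w z) :
    ∫⁻ z, ENNReal.ofReal (w z) ∂μ ≠ 0 := by
  intro h
  rw [show (fun z => ENNReal.ofReal (w z)) = ENNReal.ofReal ∘ w from rfl] at h
  rw [lintegral_eq_zero_iff (ENNReal.measurable_ofReal.comp hmeas)] at h
  have hfalse : ∀ᵐ z ∂μ, False := by
    filter_upwards [hpos, h] with z h1 h2
    simp only [Function.comp, Pi.zero_apply, ENNReal.ofReal_eq_zero] at h2
    linarith
  exact hμ (ae_eq_bot.mp (Filter.eventually_false_iff_eq_bot.mp hfalse))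

lemma le_ApPlusDisc (q : ℝ) (w : ℂ → ℝ) {z : ℂ} (hz : z ∈ Metric.sphere (0 : ℂ) 1)
    {ρ : ℝ} (hρ : 0 < ρ) :
    eAvg discMeasure (Metric.ball z ρ) w *
      (eAvg discMeasure (Metric.ball z ρ) fun x => w x ^ (-1 / (q - 1))) ^ (q - 1) ≤
      ApPlusDisc q w :=
  le_iSup_of_le z (le_iSup_of_le hz (le_iSup_of_le ρ (le_iSup_of_le hρ le_rfl)))

lemma le_RHDisc (q : ℝ) (w : ℂ → ℝ) {z : ℂ} (hz : z ∈ Metric.sphere (0 : ℂ) 1)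
    {ρ : ℝ} (hρ : 0 < ρ) :
    (eAvg discMeasure (Metric.ball z ρ) fun x => w x ^ q) ^ (1 / q) /
      eAvg discMeasure (Metric.ball z ρ) w ≤ RHDisc q w :=
  le_iSup_of_le z (le_iSup_of_le hz (le_iSup_of_le ρ (le_iSup_of_le hρ le_rfl)))

/-- Let `1 < p₀ < p < p₀/(p₀-1)`, `r = p₀/(p(p₀-1))`, `s = p/p₀`.
If `u ∈ A_s⁺(𝔻) ∩ RH_{r'}(𝔻)` and `ν^r ∈ A₂⁺(𝔻)`, then `uν ∈ A_p⁺(𝔻)` and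
`[uν]_{A_p⁺} ≤ [u]_{A_s⁺} · [u]_{RH_{r'}} · [ν^r]_{A₂⁺}^{1/r}`. -/
theorem product_weight_Ap_disc
    (p₀ p : ℝ) (h₀ : 1 < p₀) (h₀p : p₀ < p) (hp : p < p₀ / (p₀ - 1))
    (u ν : ℂ → ℝ)
    (hu : IsWeightOn discMeasure u) (hν : IsWeightOn discMeasure ν)
    (huAs : ApPlusDisc (p / p₀) u < ⊤)
    (huRH : RHDisc ((p₀ / (p * (p₀ - 1))) / (p₀ / (p * (p₀ - 1)) - 1)) u < ⊤)
    (hνA2 : ApPlusDisc 2 (fun z => ν z ^ (p₀ / (p * (p₀ - 1)))) < ⊤) :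
    ApPlusDisc p (fun z => u z * ν z) < ⊤ ∧
      ApPlusDisc p (fun z => u z * ν z) ≤
        ApPlusDisc (p / p₀) u *
          RHDisc ((p₀ / (p * (p₀ - 1))) / (p₀ / (p * (p₀ - 1)) - 1)) u *
          (ApPlusDisc 2 (fun z => ν z ^ (p₀ / (p * (p₀ - 1))))) ^
            (1 / (p₀ / (p * (p₀ - 1)))) := by
  have hp0 : (0:ℝ) < p₀ := by linarith
  have hp01 : (0:ℝ) < p₀ - 1 := by linarith
  have hp1 : 1 < p := by linarith
  have hpm1 : (0:ℝ) < p - 1 := by linarith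
  have hppos : (0:ℝ) < p := by linarith
  have hpd : p * (p₀ - 1) < p₀ := (lt_div_iff₀ hp01).mp hp
  have hpdpos : 0 < p * (p₀ - 1) := by positivity
  set r : ℝ := p₀ / (p * (p₀ - 1)) with hr_def
  have hr1 : 1 < r := (one_lt_div hpdpos).mpr hpd
  have hrpos : 0 < r := by linarith
  have hrm1 : 0 < r - 1 := by linarith
  set r' : ℝ := r / (r - 1) with hr'_def
  have hconj1 : r'.HolderConjugate r := by
    have h := Real.HolderConjugate.conjExponent hr1
    rw [Real.conjExponent] at h
    exact h.symm
  set s : ℝ := p / p₀ with hs_def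
  have hs1 : 1 < s := (one_lt_div hp0).mpr h₀p
  have hsp : s < p := div_lt_self hppos h₀
  have hsm1 : 0 < s - 1 := by linarith
  set α : ℝ := (p - 1) / (s - 1) with hα_def
  have hα1 : 1 < α := (one_lt_div hsm1).mpr (by linarith)
  set β : ℝ := r * (p - 1) with hβ_def
  have hβpos : 0 < β := by positivity
  have hconj2 : α.HolderConjugate β := by
    refine Real.holderConjugate_iff.mpr ⟨hα1, ?_⟩
    rw [hα_def, hβ_def, hs_def, hr_def]
    field_simp
    ring
  have hexp1 : -1 / (p - 1) * α = -1 / (s - 1) := by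
    rw [hα_def]; field_simp
  have hexp2 : -1 / (p - 1) * β = -r := by
    rw [hβ_def]; field_simp
  have hexp3 : 1 / α * (p - 1) = s - 1 := by
    rw [hα_def]; field_simp
  have hexp4 : 1 / β * (p - 1) = 1 / r := by
    rw [hβ_def]
    rw [div_mul_eq_mul_div, one_mul, div_eq_div_iff (by positivity) (by positivity)]
    ring
  have key : ApPlusDisc p (fun z => u z * ν z) ≤
      ApPlusDisc s u * RHDisc r' u * ApPlusDisc 2 (fun z => ν z ^ r) ^ (1 / r) := by
    rw [ApPlusDisc]
    refine iSup_le fun z => iSup_le fun hz => iSup_le fun ρ => iSup_le fun hρ => ?_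
    set m : ℝ≥0∞ := discMeasure (Metric.ball z ρ) with hm_def
    have hm0 : m ≠ 0 := discMeasure_ball_ne_zero hz hρ
    have hmT : m ≠ ⊤ := discMeasure_ball_ne_top z ρ
    set μt : Measure ℂ := m⁻¹ • discMeasure.restrict (Metric.ball z ρ) with hμt_def
    have hμtuniv : μt Set.univ = 1 := by
      rw [hμt_def, Measure.smul_apply, Measure.restrict_apply_univ, smul_eq_mul, ← hm_def,
        ENNReal.inv_mul_cancel hm0 hmT]
    have hμtne : μt ≠ 0 := by
      intro h
      rw [h] at hμtuniv
      simp at hμtuniv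
    have heAvg : ∀ w : ℂ → ℝ, eAvg discMeasure (Metric.ball z ρ) w
        = ∫⁻ x, ENNReal.ofReal (w x) ∂μt := by
      intro w
      rw [hμt_def, lintegral_smul_measure, eAvg, ← hm_def, ENNReal.div_eq_inv_mul, smul_eq_mul]
    have haU : ∀ᵐ x ∂μt, 0 < u x := by
      rw [hμt_def]
      exact Measure.ae_smul_measure (ae_restrict_of_ae hu.2) _
    have haV : ∀ᵐ x ∂μt, 0 < ν x := by
      rw [hμt_def]
      exact Measure.ae_smul_measure (ae_restrict_of_ae hν.2) _
    have hmu : Measurable u := hu.1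
    have hmν : Measurable ν := hν.1
    simp only [heAvg]
    set E1 := ∫⁻ x, ENNReal.ofReal (u x) ∂μt with hE1
    set E2 := ∫⁻ x, ENNReal.ofReal (u x ^ (-1 / (s - 1))) ∂μt with hE2
    set E3 := ∫⁻ x, ENNReal.ofReal (u x ^ r') ∂μt with hE3
    set E4 := ∫⁻ x, ENNReal.ofReal (ν x ^ r) ∂μt with hE4
    set E5 := ∫⁻ x, ENNReal.ofReal (ν x ^ (-r)) ∂μt with hE5
    have LS : E1 * E2 ^ (s - 1) ≤ ApPlusDisc s u := by
      have h := le_ApPlusDisc s u hz hρ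
      simp only [heAvg] at h
      rw [hE1, hE2]
      exact h
    have LS2 : E4 * E5 ≤ ApPlusDisc 2 (fun x => ν x ^ r) := by
      have h := le_ApPlusDisc 2 (fun x => ν x ^ r) hz hρ
      simp only [heAvg] at h
      rw [show (2:ℝ) - 1 = 1 by norm_num, ENNReal.rpow_one] at h
      rw [hE4, hE5]
      refine le_trans (le_of_eq ?_) h
      congr 1
      refine lintegral_congr_ae ?_
      filter_upwards [haV] with x hx
      congr 1
      rw [show (-1:ℝ) / 1 = -1 by norm_num, ← Real.rpow_mul hx.le, mul_neg_one]
    have LRH : E3 ^ (1 / r') / E1 ≤ RHDisc r' u := by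
      have h := le_RHDisc r' u hz hρ
      simp only [heAvg] at h
      rw [hE3, hE1]
      exact h
    have hE1ne : E1 ≠ 0 := lintegral_ofReal_ne_zero hμtne hmu haU
    have hE2ne : E2 ≠ 0 := by
      refine lintegral_ofReal_ne_zero hμtne (hmu.pow measurable_const) ?_
      filter_upwards [haU] with x hx
      exact Real.rpow_pos_of_pos hx _
    have hE2pow : E2 ^ (s - 1) ≠ 0 := by
      simp only [ne_eq, ENNReal.rpow_eq_zero_iff, not_or, not_and]
      exact ⟨fun h => absurd h hE2ne, fun _ => by linarith⟩
    have hE1T : E1 ≠ ⊤ := by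
      intro h
      have hlt := lt_of_le_of_lt LS huAs
      rw [h, ENNReal.top_mul hE2pow] at hlt
      exact lt_irrefl _ hlt
    have hRH' : E3 ^ (1 / r') ≤ RHDisc r' u * E1 := by
      calc E3 ^ (1 / r') = E3 ^ (1 / r') / E1 * E1 :=
            (ENNReal.div_mul_cancel hE1ne hE1T).symm
        _ ≤ RHDisc r' u * E1 := mul_le_mul_left LRH E1
    have hH1 : (∫⁻ x, ENNReal.ofReal (u x * ν x) ∂μt) ≤ E3 ^ (1 / r') * E4 ^ (1 / r) := by
      have h := ENNReal.lintegral_mul_le_Lp_mul_Lq μt hconj1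
        (f := fun x => ENNReal.ofReal (u x)) (g := fun x => ENNReal.ofReal (ν x))
        (ENNReal.measurable_ofReal.comp hmu).aemeasurable
        (ENNReal.measurable_ofReal.comp hmν).aemeasurable
      simp only [Pi.mul_apply] at h
      calc (∫⁻ x, ENNReal.ofReal (u x * ν x) ∂μt)
          = ∫⁻ x, ENNReal.ofReal (u x) * ENNReal.ofReal (ν x) ∂μt := by
            refine lintegral_congr_ae ?_
            filter_upwards [haU] with x hx
            exact ENNReal.ofReal_mul hx.le
        _ ≤ (∫⁻ x, ENNReal.ofReal (u x) ^ r' ∂μt) ^ (1 / r') *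
            (∫⁻ x, ENNReal.ofReal (ν x) ^ r ∂μt) ^ (1 / r) := h
        _ = E3 ^ (1 / r') * E4 ^ (1 / r) := by
            rw [hE3, hE4]
            congr 2
            · refine lintegral_congr_ae ?_
              filter_upwards [haU] with x hx
              exact ENNReal.ofReal_rpow_of_pos hx
            · refine lintegral_congr_ae ?_
              filter_upwards [haV] with x hx
              exact ENNReal.ofReal_rpow_of_pos hx
    have hH2 : (∫⁻ x, ENNReal.ofReal ((u x * ν x) ^ (-1 / (p - 1))) ∂μt)
        ≤ E2 ^ (1 / α) * E5 ^ (1 / β) := by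
      have h := ENNReal.lintegral_mul_le_Lp_mul_Lq μt hconj2
        (f := fun x => ENNReal.ofReal (u x ^ (-1 / (p - 1))))
        (g := fun x => ENNReal.ofReal (ν x ^ (-1 / (p - 1))))
        (ENNReal.measurable_ofReal.comp (hmu.pow measurable_const)).aemeasurable
        (ENNReal.measurable_ofReal.comp (hmν.pow measurable_const)).aemeasurable
      simp only [Pi.mul_apply] at h
      calc (∫⁻ x, ENNReal.ofReal ((u x * ν x) ^ (-1 / (p - 1))) ∂μt)
          = ∫⁻ x, ENNReal.ofReal (u x ^ (-1 / (p - 1))) *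
              ENNReal.ofReal (ν x ^ (-1 / (p - 1))) ∂μt := by
            refine lintegral_congr_ae ?_
            filter_upwards [haU, haV] with x hx1 hx2
            rw [Real.mul_rpow hx1.le hx2.le,
              ENNReal.ofReal_mul (Real.rpow_nonneg hx1.le _)]
        _ ≤ (∫⁻ x, ENNReal.ofReal (u x ^ (-1 / (p - 1))) ^ α ∂μt) ^ (1 / α) *
            (∫⁻ x, ENNReal.ofReal (ν x ^ (-1 / (p - 1))) ^ β ∂μt) ^ (1 / β) := h
        _ = E2 ^ (1 / α) * E5 ^ (1 / β) := by
            rw [hE2, hE5]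
            congr 2
            · refine lintegral_congr_ae ?_
              filter_upwards [haU] with x hx
              rw [ENNReal.ofReal_rpow_of_pos (Real.rpow_pos_of_pos hx _),
                ← Real.rpow_mul hx.le, hexp1]
            · refine lintegral_congr_ae ?_
              filter_upwards [haV] with x hx
              rw [ENNReal.ofReal_rpow_of_pos (Real.rpow_pos_of_pos hx _),
                ← Real.rpow_mul hx.le, hexp2]
    calc (∫⁻ x, ENNReal.ofReal (u x * ν x) ∂μt) *
          (∫⁻ x, ENNReal.ofReal ((u x * ν x) ^ (-1 / (p - 1))) ∂μt) ^ (p - 1)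
        ≤ (E3 ^ (1 / r') * E4 ^ (1 / r)) * (E2 ^ (1 / α) * E5 ^ (1 / β)) ^ (p - 1) :=
          mul_le_mul' hH1 (ENNReal.rpow_le_rpow hH2 hpm1.le)
      _ = E3 ^ (1 / r') * E4 ^ (1 / r) * (E2 ^ (s - 1) * E5 ^ (1 / r)) := by
          rw [ENNReal.mul_rpow_of_nonneg _ _ hpm1.le, ← ENNReal.rpow_mul, ← ENNReal.rpow_mul,
            hexp3, hexp4]
      _ ≤ (RHDisc r' u * E1) * E4 ^ (1 / r) * (E2 ^ (s - 1) * E5 ^ (1 / r)) :=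
          mul_le_mul' (mul_le_mul' hRH' le_rfl) le_rfl
      _ = RHDisc r' u * ((E1 * E2 ^ (s - 1)) * (E4 ^ (1 / r) * E5 ^ (1 / r))) := by ring
      _ = RHDisc r' u * ((E1 * E2 ^ (s - 1)) * (E4 * E5) ^ (1 / r)) := by
          rw [ENNReal.mul_rpow_of_nonneg _ _ (one_div_nonneg.mpr hrpos.le)]
      _ ≤ RHDisc r' u * (ApPlusDisc s u * (ApPlusDisc 2 fun x => ν x ^ r) ^ (1 / r)) :=
          mul_le_mul' le_rfl
            (mul_le_mul' LS (ENNReal.rpow_le_rpow LS2 (one_div_nonneg.mpr hrpos.le)))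
      _ = ApPlusDisc s u * RHDisc r' u * (ApPlusDisc 2 fun x => ν x ^ r) ^ (1 / r) := by
          ring
  refine ⟨lt_of_le_of_lt key ?_, key⟩
  exact ENNReal.mul_lt_top (ENNReal.mul_lt_top huAs huRH)
    (ENNReal.rpow_lt_top_of_nonneg (one_div_nonneg.mpr hrpos.le) hνA2.ne)
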